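/- (Bianchi identity, second part) For any connection φ for a sub vector bundle F of TM, with curvature R and cocurvature R̄, one has [R, φ] = i(R)R̄ + i(R̄)R, where [·,·] is the Frölicher–Nijenhuis bracket and i denotes the insertion operator of one tangent-bundle-valued form into another. -/

import Mathlib

/-!
Graded derivations of the algebra of differential forms associated with a connection
(P. Michor).  We model vector fields on a smooth manifold `M` as derivations of the
commutative `ℝ`-algebra `A = C^∞(M, ℝ)` (realized inside `Module.End ℝ A`), and
differential forms (scalar valued, resp. tangent-bundle valued) as functions on lists of
vector fields which are alternating `A`-multilinear of a fixed degree.  All the operators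
of the Frölicher-Nijenhuis calculus are defined by their classical global formulas.
-/

noncomputable section

open scoped Manifold

variable (A : Type*) [CommRing A] [Algebra ℝ A]

/-- The carrier in which vector fields live: `ℝ`-linear endomorphisms of the functions. -/
abbrev Vec := Module.End ℝ A

/-- A vector field is a derivation of the algebra of (smooth) functions. -/
def IsVectorField (X : Vec A) : Prop := ∀ f g : A, X (f * g) = f * X g + g * X f

/-- Raw scalar differential forms: functions on lists of vector fields. -/
abbrev SF := List (Vec A) → A

/-- Raw tangent-bundle valued differential forms. -/
abbrev VF := List (Vec A) → Vec A

/-- All members of the list are genuine vector fields. -/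
def VFList (ℓ : List (Vec A)) : Prop := ∀ X ∈ ℓ, IsVectorField A X

/-- `ω` is a (scalar valued) differential `p`-form: it is supported on lists of length
`p`, it is `A`-multilinear and alternating (on vector fields). -/
structure IsSForm (p : ℕ) (ω : SF A) : Prop where
  support : ∀ ℓ, ℓ.length ≠ p → ω ℓ = 0
  map_add : ∀ l₁ (X Y : Vec A) l₂, VFList A l₁ → VFList A l₂ →
    IsVectorField A X → IsVectorField A Y →
    ω (l₁ ++ (X + Y) :: l₂) = ω (l₁ ++ X :: l₂) + ω (l₁ ++ Y :: l₂)
  map_smul : ∀ l₁ (f : A) (X : Vec A) l₂, VFList A l₁ → VFList A l₂ →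
    IsVectorField A X → ω (l₁ ++ (f • X) :: l₂) = f * ω (l₁ ++ X :: l₂)
  alternate : ∀ l₁ (X : Vec A) l₂ l₃, VFList A l₁ → VFList A l₂ → VFList A l₃ →
    IsVectorField A X → ω (l₁ ++ X :: l₂ ++ X :: l₃) = 0

/-- `K` is a tangent-bundle valued differential `p`-form, `K ∈ Ω^p(M; TM)`. -/
structure IsVForm (p : ℕ) (K : VF A) : Prop where
  support : ∀ ℓ, ℓ.length ≠ p → K ℓ = 0
  map_add : ∀ l₁ (X Y : Vec A) l₂, VFList A l₁ → VFList A l₂ →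
    IsVectorField A X → IsVectorField A Y →
    K (l₁ ++ (X + Y) :: l₂) = K (l₁ ++ X :: l₂) + K (l₁ ++ Y :: l₂)
  map_smul : ∀ l₁ (f : A) (X : Vec A) l₂, VFList A l₁ → VFList A l₂ →
    IsVectorField A X → K (l₁ ++ (f • X) :: l₂) = f • K (l₁ ++ X :: l₂)
  alternate : ∀ l₁ (X : Vec A) l₂ l₃, VFList A l₁ → VFList A l₂ → VFList A l₃ →
    IsVectorField A X → K (l₁ ++ X :: l₂ ++ X :: l₃) = 0
  vec : ∀ ℓ, VFList A ℓ → IsVectorField A (K ℓ)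

/-- A connection for a sub vector bundle `F ⊆ TM`:  a fiber linear projection
`φ : TM → F`, i.e. an idempotent `A`-linear operator on vector fields (whose image is the
space of sections of `F`). -/
structure IsConnection (φ : Vec A → Vec A) : Prop where
  vf : ∀ X, IsVectorField A X → IsVectorField A (φ X)
  idem : ∀ X, IsVectorField A X → φ (φ X) = φ X
  map_add : ∀ X Y, IsVectorField A X → IsVectorField A Y → φ (X + Y) = φ X + φ Y
  map_smul : ∀ (f : A) (X : Vec A), IsVectorField A X → φ (f • X) = f • φ X

/-- The horizontal projection `h = Id - φ` of a connection `φ`. -/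
def hpr (φ : Vec A → Vec A) : Vec A → Vec A := fun X => X - φ X

/-- A bundle endomorphism of `TM` (e.g. `φ` or `h`) viewed as a `1`-form in `Ω¹(M;TM)`. -/
def oneF (φ : Vec A → Vec A) : VF A := fun ℓ => match ℓ with
  | [X] => φ X
  | _ => 0

/-- The curvature `R ∈ Ω²(M;TM)` of the connection, `R(X,Y) = φ [hX, hY]`. -/
def curv (φ : Vec A → Vec A) : VF A := fun ℓ => match ℓ with
  | [X, Y] => φ ⁅hpr A φ X, hpr A φ Y⁆
  | _ => 0

/-- The cocurvature `R̄ ∈ Ω²(M;TM)` of the connection, `R̄(X,Y) = h [φX, φY]`. -/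
def cocurv (φ : Vec A → Vec A) : VF A := fun ℓ => match ℓ with
  | [X, Y] => hpr A φ ⁅φ X, φ Y⁆
  | _ => 0

/-- `h* : Ω(M) → Ω(M)`, `(h*ω)(X₁,…,X_p) = ω(hX₁,…,hX_p)`. -/
def hstar (φ : Vec A → Vec A) : SF A →ₗ[ℝ] SF A :=
  LinearMap.pi fun ℓ => LinearMap.proj (ℓ.map (hpr A φ))

/-- The exterior derivative, by the global (Koszul) formula. -/
def extd : SF A →ₗ[ℝ] SF A :=
  LinearMap.pi fun ℓ =>
    (∑ i : Fin ℓ.length, ((-1 : ℝ) ^ (i : ℕ)) •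
      ((ℓ.get i) ∘ₗ (LinearMap.proj (ℓ.eraseIdx (i : ℕ)) : SF A →ₗ[ℝ] A)))
    + ∑ i : Fin ℓ.length,
        ∑ j ∈ Finset.univ.filter (fun j : Fin ℓ.length => (i : ℕ) < (j : ℕ)),
          ((-1 : ℝ) ^ ((i : ℕ) + (j : ℕ))) •
            (LinearMap.proj ((⁅ℓ.get i, ℓ.get j⁆ : Vec A) ::
              ((ℓ.eraseIdx (j : ℕ)).eraseIdx (i : ℕ))) : SF A →ₗ[ℝ] A)

/-- The insertion operator `i(K) : Ω^p(M) → Ω^{p+k-1}(M)` of `K ∈ Ω^k(M;TM)`: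
`(i(K)ω)(X₁,…,X_n) = 1/(k! (n-k)!) ∑_σ ε(σ) ω(K(X_{σ1},…,X_{σk}), X_{σ(k+1)},…)`. -/
def insS (k : ℕ) (K : VF A) : SF A →ₗ[ℝ] SF A :=
  LinearMap.pi fun ℓ =>
    if hk : k ≤ ℓ.length then
      (((k.factorial * (ℓ.length - k).factorial : ℕ) : ℝ))⁻¹ •
        ∑ σ : Equiv.Perm (Fin ℓ.length),
          (((Equiv.Perm.sign σ : ℤ) : ℝ)) •
            (LinearMap.proj
              ((K (List.ofFn fun m : Fin k => ℓ.get (σ (Fin.castLE hk m)))) ::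
                List.ofFn fun m : Fin (ℓ.length - k) =>
                  ℓ.get (σ ⟨k + (m : ℕ), by have := m.isLt; omega⟩)) : SF A →ₗ[ℝ] A)
    else 0

/-- The insertion operator over `h*`:  `i^h(K)` of `K ∈ Ω^k(M;TM)`, given by
`(i^h(K)ω)(X₁,…,X_n) = 1/(k! (n-k)!) ∑_σ ε(σ) ω(K(X_{σ1},…,X_{σk}), hX_{σ(k+1)},…)`. -/
def insH (φ : Vec A → Vec A) (k : ℕ) (K : VF A) : SF A →ₗ[ℝ] SF A :=
  LinearMap.pi fun ℓ =>
    if hk : k ≤ ℓ.length then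
      (((k.factorial * (ℓ.length - k).factorial : ℕ) : ℝ))⁻¹ •
        ∑ σ : Equiv.Perm (Fin ℓ.length),
          (((Equiv.Perm.sign σ : ℤ) : ℝ)) •
            (LinearMap.proj
              ((K (List.ofFn fun m : Fin k => ℓ.get (σ (Fin.castLE hk m)))) ::
                List.ofFn fun m : Fin (ℓ.length - k) =>
                  hpr A φ (ℓ.get (σ ⟨k + (m : ℕ), by have := m.isLt; omega⟩))) : SF A →ₗ[ℝ] A)
    else 0

/-- Insertion `i(K)T` of `K ∈ Ω^k(M;TM)` into a vector valued form `T`. -/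
def insVV (k : ℕ) (K : VF A) (T : VF A) : VF A := fun ℓ =>
  if hk : k ≤ ℓ.length then
    (((k.factorial * (ℓ.length - k).factorial : ℕ) : ℝ))⁻¹ •
      ∑ σ : Equiv.Perm (Fin ℓ.length),
        (((Equiv.Perm.sign σ : ℤ) : ℝ)) •
          T ((K (List.ofFn fun m : Fin k => ℓ.get (σ (Fin.castLE hk m)))) ::
              List.ofFn fun m : Fin (ℓ.length - k) =>
                ℓ.get (σ ⟨k + (m : ℕ), by have := m.isLt; omega⟩))
  else 0

/-- Insertion over `h*`, `i^h(K)T`, of `K ∈ Ω^k(M;TM)` into a vector valued form `T`. -/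
def insHVV (φ : Vec A → Vec A) (k : ℕ) (K : VF A) (T : VF A) : VF A := fun ℓ =>
  if hk : k ≤ ℓ.length then
    (((k.factorial * (ℓ.length - k).factorial : ℕ) : ℝ))⁻¹ •
      ∑ σ : Equiv.Perm (Fin ℓ.length),
        (((Equiv.Perm.sign σ : ℤ) : ℝ)) •
          T ((K (List.ofFn fun m : Fin k => ℓ.get (σ (Fin.castLE hk m)))) ::
              List.ofFn fun m : Fin (ℓ.length - k) =>
                hpr A φ (ℓ.get (σ ⟨k + (m : ℕ), by have := m.isLt; omega⟩)))
  else 0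

/-- The Lie derivative `Θ(K) = [i(K), d]` along `K ∈ Ω^k(M;TM)`. -/
def theta (k : ℕ) (K : VF A) : SF A →ₗ[ℝ] SF A :=
  insS A k K ∘ₗ extd A - ((-1 : ℝ) ^ (k + 1)) • (extd A ∘ₗ insS A k K)

/-- `Θ^h(K) = h* ∘ Θ(K) ∘ h*`. -/
def thetaH (φ : Vec A → Vec A) (k : ℕ) (K : VF A) : SF A →ₗ[ℝ] SF A :=
  hstar A φ ∘ₗ theta A k K ∘ₗ hstar A φ

/-- A function, viewed as a `0`-form. -/
def constF : A →ₗ[ℝ] SF A where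
  toFun f := fun ℓ => match ℓ with
    | [] => f
    | _ => 0
  map_add' f g := by funext ℓ; cases ℓ <;> simp
  map_smul' r f := by funext ℓ; cases ℓ <;> simp

/-- The Frölicher-Nijenhuis bracket `[K, L] ∈ Ω^{k+l}(M;TM)` of `K ∈ Ω^k(M;TM)` and
`L ∈ Ω^l(M;TM)`, characterized by `Θ([K,L]) = [Θ(K), Θ(L)]` via
`[K,L](X₁,…,X_{k+l}) f = ([Θ(K),Θ(L)] f)(X₁,…,X_{k+l})`. -/
def fnb (k l : ℕ) (K L : VF A) : VF A := fun ℓ =>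
  LinearMap.proj ℓ ∘ₗ
    (theta A k K ∘ₗ theta A l L - ((-1 : ℝ) ^ (k * l)) • (theta A l L ∘ₗ theta A k K)) ∘ₗ
      constF A

/-- Wedge product of a scalar `p`-form with a scalar form. -/
def wedgeSS (p : ℕ) (ω ψ : SF A) : SF A := fun ℓ =>
  if hp : p ≤ ℓ.length then
    (((p.factorial * (ℓ.length - p).factorial : ℕ) : ℝ))⁻¹ •
      ∑ σ : Equiv.Perm (Fin ℓ.length),
        (((Equiv.Perm.sign σ : ℤ) : ℝ)) •
          (ω (List.ofFn fun m : Fin p => ℓ.get (σ (Fin.castLE hp m))) *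
            ψ (List.ofFn fun m : Fin (ℓ.length - p) =>
                ℓ.get (σ ⟨p + (m : ℕ), by have := m.isLt; omega⟩)))
  else 0

/-- Wedge product of a scalar `p`-form with a vector valued form. -/
def wedgeSV (p : ℕ) (ω : SF A) (K : VF A) : VF A := fun ℓ =>
  if hp : p ≤ ℓ.length then
    (((p.factorial * (ℓ.length - p).factorial : ℕ) : ℝ))⁻¹ •
      ∑ σ : Equiv.Perm (Fin ℓ.length),
        (((Equiv.Perm.sign σ : ℤ) : ℝ)) •
          (ω (List.ofFn fun m : Fin p => ℓ.get (σ (Fin.castLE hp m))) •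
            K (List.ofFn fun m : Fin (ℓ.length - p) =>
                ℓ.get (σ ⟨p + (m : ℕ), by have := m.isLt; omega⟩)))
  else 0

/-- `K ∘ Λh`: precompose each argument of a vector valued form with `h`. -/
def precH (φ : Vec A → Vec A) (K : VF A) : VF A := fun ℓ => K (ℓ.map (hpr A φ))

/-- `h ∘ K`: postcompose the values of a vector valued form with `h`. -/
def postH (φ : Vec A → Vec A) (K : VF A) : VF A := fun ℓ => hpr A φ (K ℓ)

/-- `φ ∘ K`: postcompose the values of a vector valued form with `φ`. -/
def postP (φ : Vec A → Vec A) (K : VF A) : VF A := fun ℓ => φ (K ℓ)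

/-- Equality of vector valued forms (tested on vector fields). -/
def VEq (K L : VF A) : Prop := ∀ ℓ, VFList A ℓ → K ℓ = L ℓ

/-- Equality of operators on `Ω(M)` (tested on genuine forms and vector fields). -/
def OpEq (D₁ D₂ : SF A →ₗ[ℝ] SF A) : Prop :=
  ∀ (p : ℕ) (ω : SF A), IsSForm A p ω → ∀ ℓ, VFList A ℓ → D₁ ω ℓ = D₂ ω ℓ

/-- A scalar form is horizontal: it is killed by insertion of any vertical vector. -/
def HorS (φ : Vec A → Vec A) (ω : SF A) : Prop :=
  ∀ l₁ (Y : Vec A) l₂, IsVectorField A Y → ω (l₁ ++ φ Y :: l₂) = 0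

/-- A vector valued form is horizontal: it is killed by any vertical argument. -/
def HorV (φ : Vec A → Vec A) (K : VF A) : Prop :=
  ∀ l₁ (Y : Vec A) l₂, IsVectorField A Y → K (l₁ ++ φ Y :: l₂) = 0

/-- `K ∈ Ω^k(M;TM)^h`, i.e. `h ∘ K = K ∘ Λ^k h`. -/
def EquivH (φ : Vec A → Vec A) (K : VF A) : Prop :=
  ∀ ℓ, VFList A ℓ → hpr A φ (K ℓ) = K (ℓ.map (hpr A φ))

/-- `D` is a graded derivation of `Ω(M)` over `h*` of degree `k`:
`D(ω ∧ ψ) = Dω ∧ h*ψ + (-1)^{k·|ω|} h*ω ∧ Dψ`. -/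
structure IsDerOverH (φ : Vec A → Vec A) (k : ℕ) (D : SF A →ₗ[ℝ] SF A) : Prop where
  degree : ∀ p ω, IsSForm A p ω → IsSForm A (p + k) (D ω)
  leibniz : ∀ (p q : ℕ) (ω ψ : SF A), IsSForm A p ω → IsSForm A q ψ →
    D (wedgeSS A p ω ψ) = wedgeSS A (p + k) (D ω) (hstar A φ ψ)
      + ((-1 : ℝ) ^ (k * p)) • wedgeSS A p (hstar A φ ω) (D ψ)

/-- `D` commutes with `h*` (i.e. `[D, h*] = 0` on `Ω(M)`). -/
def CommutesWithHstar (φ : Vec A → Vec A) (D : SF A →ₗ[ℝ] SF A) : Prop :=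
  ∀ (p : ℕ) (ω : SF A), IsSForm A p ω → ∀ ℓ, VFList A ℓ →
    D (hstar A φ ω) ℓ = hstar A φ (D ω) ℓ

/-- `D` is algebraic: it vanishes on `Ω⁰(M)`. -/
def AlgebraicDer (D : SF A →ₗ[ℝ] SF A) : Prop := ∀ ω : SF A, IsSForm A 0 ω → D ω = 0

/-- The bracket `[K,L]^{∧,h} = i^h(K)L - (-1)^{kl} i^h(L)K` on `Ω^{*+1}(M;TM)^h`,
for `K ∈ Ω^{k+1}(M;TM)^h` and `L ∈ Ω^{l+1}(M;TM)^h`. -/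
def hookBr (φ : Vec A → Vec A) (k l : ℕ) (K L : VF A) : VF A :=
  insHVV A φ (k + 1) K L - ((-1 : ℝ) ^ (k * l)) • insHVV A φ (l + 1) L K

/-- The classical covariant derivative `D^h = h* ∘ d`. -/
def covD (φ : Vec A → Vec A) : SF A →ₗ[ℝ] SF A := hstar A φ ∘ₗ extd A

/-- The covariant derivative `d^h = h* ∘ d ∘ h*`. -/
def covd (φ : Vec A → Vec A) : SF A →ₗ[ℝ] SF A := hstar A φ ∘ₗ extd A ∘ₗ hstar A φ

end

/-- The commutative `ℝ`-algebra of smooth real valued functions on a manifold `M`. -/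
abbrev SmoothFns {EM : Type*} [NormedAddCommGroup EM] [NormedSpace ℝ EM]
    {HM : Type*} [TopologicalSpace HM] (IM : ModelWithCorners ℝ EM HM)
    (M : Type*) [TopologicalSpace M] [ChartedSpace HM M] : Type _ :=
  ContMDiffMap IM (modelWithCornersSelf ℝ ℝ) M ℝ (⊤ : ℕ∞)

instance vecLieRing {A : Type*} [CommRing A] [Algebra ℝ A] : LieRing (Vec A) :=
  LieRing.ofAssociativeRing

/-! ### Auxiliary lemmas -/

open Equiv in
lemma perm3_sum {M : Type*} [AddCommMonoid M] (g : Equiv.Perm (Fin 3) → M) :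
    ∑ σ, g σ = g 1 + g (swap 0 1) + g (swap 0 2) + g (swap 1 2)
      + g (swap 0 1 * swap 1 2) + g (swap 0 2 * swap 1 2) := by
  rw [show (Finset.univ : Finset (Equiv.Perm (Fin 3))) =
    {1, Equiv.swap 0 1, Equiv.swap 0 2, Equiv.swap 1 2,
     Equiv.swap 0 1 * Equiv.swap 1 2, Equiv.swap 0 2 * Equiv.swap 1 2} from by decide]
  rw [Finset.sum_insert (by decide), Finset.sum_insert (by decide),
    Finset.sum_insert (by decide), Finset.sum_insert (by decide),
    Finset.sum_insert (by decide), Finset.sum_singleton]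
  abel

open Equiv in
lemma perm2_sum {M : Type*} [AddCommMonoid M] (g : Equiv.Perm (Fin 2) → M) :
    ∑ σ, g σ = g 1 + g (swap 0 1) := by
  rw [show (Finset.univ : Finset (Equiv.Perm (Fin 2))) = {1, Equiv.swap 0 1} from by decide]
  rw [Finset.sum_insert (by decide), Finset.sum_singleton]

lemma perm1_sum {M : Type*} [AddCommMonoid M] (g : Equiv.Perm (Fin 1) → M) :
    ∑ σ, g σ = g 1 := by
  rw [show (Finset.univ : Finset (Equiv.Perm (Fin 1))) = {1} from by decide, Finset.sum_singleton]

@[simp] lemma myCastLE_zero {n m : ℕ} (h : n + 1 ≤ m + 1) : Fin.castLE h (0 : Fin (n+1)) = 0 := rfl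
@[simp] lemma myCastLE_one {n m : ℕ} (h : n + 2 ≤ m + 2) : Fin.castLE h (1 : Fin (n+2)) = 1 := rfl
@[simp] lemma sw01_0 : (Equiv.swap (0:Fin 3) 1) 0 = 1 := by decide
@[simp] lemma sw01_1 : (Equiv.swap (0:Fin 3) 1) 1 = 0 := by decide
@[simp] lemma sw01_2 : (Equiv.swap (0:Fin 3) 1) 2 = 2 := by decide
@[simp] lemma sw02_0 : (Equiv.swap (0:Fin 3) 2) 0 = 2 := by decide
@[simp] lemma sw02_1 : (Equiv.swap (0:Fin 3) 2) 1 = 1 := by decide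
@[simp] lemma sw02_2 : (Equiv.swap (0:Fin 3) 2) 2 = 0 := by decide
@[simp] lemma sw12_0 : (Equiv.swap (1:Fin 3) 2) 0 = 0 := by decide
@[simp] lemma sw12_1 : (Equiv.swap (1:Fin 3) 2) 1 = 2 := by decide
@[simp] lemma sw12_2 : (Equiv.swap (1:Fin 3) 2) 2 = 1 := by decide
@[simp] lemma sw2_0 : (Equiv.swap (0:Fin 2) 1) 0 = 1 := by decide
@[simp] lemma sw2_1 : (Equiv.swap (0:Fin 2) 1) 1 = 0 := by decide

section EvalLemmas
variable {A : Type*} [CommRing A] [Algebra ℝ A]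

lemma extd_one (ω : SF A) (U : Vec A) : extd A ω [U] = U (ω []) := by
  simp [extd, Fin.sum_univ_succ, Finset.sum_filter]

lemma extd_two (ω : SF A) (U V : Vec A) :
    extd A ω [U, V] = U (ω [V]) - V (ω [U]) - ω [⁅U, V⁆] := by
  simp [extd, Fin.sum_univ_succ, Finset.sum_filter]; abel

lemma extd_three (ω : SF A) (U V W : Vec A) :
    extd A ω [U, V, W] = U (ω [V, W]) - V (ω [U, W]) + W (ω [U, V])
      - ω [⁅U, V⁆, W] + ω [⁅U, W⁆, V] - ω [⁅V, W⁆, U] := by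
  simp only [extd, LinearMap.pi_apply, LinearMap.add_apply, LinearMap.coe_sum,
    Finset.sum_apply, LinearMap.smul_apply, LinearMap.coe_comp, Function.comp_apply,
    LinearMap.coe_proj, Function.eval, List.length_cons, List.length_nil]
  rw [Fin.sum_univ_three, Fin.sum_univ_three]
  rw [show (Finset.filter (fun j : Fin 3 => ((0:Fin 3) : ℕ) < (j : ℕ)) Finset.univ) = {1, 2} from by decide,
    show (Finset.filter (fun j : Fin 3 => ((1:Fin 3) : ℕ) < (j : ℕ)) Finset.univ) = {2} from by decide,
    show (Finset.filter (fun j : Fin 3 => ((2:Fin 3) : ℕ) < (j : ℕ)) Finset.univ) = ∅ from by decide]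
  simp
  norm_num
  abel

lemma insS_one_one (K : VF A) (ω : SF A) (U : Vec A) :
    insS A 1 K ω [U] = ω [K [U]] := by
  simp [insS, perm1_sum]

lemma insS_one_two (K : VF A) (ω : SF A) (U V : Vec A) :
    insS A 1 K ω [U, V] = ω [K [U], V] - ω [K [V], U] := by
  simp [insS, perm2_sum]; module

lemma insS_two_two (K : VF A) (ω : SF A) (U V : Vec A) :
    insS A 2 K ω [U, V] = (2 : ℝ)⁻¹ • (ω [K [U, V]] - ω [K [V, U]]) := by
  simp [insS, perm2_sum]; module

lemma insS_two_three (K : VF A) (ω : SF A) (U V W : Vec A) :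
    insS A 2 K ω [U, V, W] = (2 : ℝ)⁻¹ •
      (ω [K [U, V], W] - ω [K [U, W], V] - ω [K [V, U], W] + ω [K [V, W], U]
        + ω [K [W, U], V] - ω [K [W, V], U]) := by
  simp [insS, perm3_sum]; module

lemma insS_one_three (K : VF A) (ω : SF A) (U V W : Vec A) :
    insS A 1 K ω [U, V, W] = (2 : ℝ)⁻¹ •
      (ω [K [U], V, W] - ω [K [U], W, V] - ω [K [V], U, W] + ω [K [V], W, U]
        + ω [K [W], U, V] - ω [K [W], V, U]) := by
  simp [insS, perm3_sum]; module

lemma insVV_two_three (K T : VF A) (U V W : Vec A) :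
    insVV A 2 K T [U, V, W] = (2 : ℝ)⁻¹ •
      (T [K [U, V], W] - T [K [U, W], V] - T [K [V, U], W] + T [K [V, W], U]
        + T [K [W, U], V] - T [K [W, V], U]) := by
  simp [insVV, perm3_sum]; module

end EvalLemmas

section Basic
variable {A : Type*} [CommRing A] [Algebra ℝ A]

lemma vf_zero : IsVectorField A 0 := by intro f g; simp

lemma vf_add {X Y : Vec A} (hX : IsVectorField A X) (hY : IsVectorField A Y) :
    IsVectorField A (X + Y) := by
  intro f g; simp only [LinearMap.add_apply, hX f g, hY f g]; ring

lemma vf_neg {X : Vec A} (hX : IsVectorField A X) : IsVectorField A (-X) := by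
  intro f g; simp only [LinearMap.neg_apply, hX f g]; ring

lemma vf_sub {X Y : Vec A} (hX : IsVectorField A X) (hY : IsVectorField A Y) :
    IsVectorField A (X - Y) := by
  intro f g; simp only [LinearMap.sub_apply, hX f g, hY f g]; ring

lemma vf_bracket {X Y : Vec A} (hX : IsVectorField A X) (hY : IsVectorField A Y) :
    IsVectorField A ⁅X, Y⁆ := by
  intro f g
  simp only [Ring.lie_def, LinearMap.sub_apply, Module.End.mul_apply]
  rw [hY f g, hX f g, map_add, map_add, hX f (Y g), hX g (Y f), hY f (X g), hY g (X f)]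
  ring

variable (φ : Vec A → Vec A)

lemma vf_hpr (hφ : IsConnection A φ) {X : Vec A} (hX : IsVectorField A X) :
    IsVectorField A (hpr A φ X) := vf_sub hX (hφ.vf X hX)

lemma conn_zero (hφ : IsConnection A φ) : φ 0 = 0 := by
  have h := hφ.map_add 0 0 vf_zero vf_zero
  rw [add_zero] at h
  have : φ 0 + φ 0 = φ 0 + 0 := by rw [add_zero]; exact h.symm
  exact (add_left_cancel this)

lemma conn_neg (hφ : IsConnection A φ) {X : Vec A} (hX : IsVectorField A X) :
    φ (-X) = -φ X := by
  have h := hφ.map_add X (-X) hX (vf_neg hX)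
  rw [add_neg_cancel, conn_zero φ hφ] at h
  exact (neg_eq_of_add_eq_zero_right h.symm).symm

lemma conn_add (hφ : IsConnection A φ) {X Y : Vec A} (hX : IsVectorField A X)
    (hY : IsVectorField A Y) : φ (X + Y) = φ X + φ Y := hφ.map_add X Y hX hY

lemma conn_sub (hφ : IsConnection A φ) {X Y : Vec A} (hX : IsVectorField A X)
    (hY : IsVectorField A Y) : φ (X - Y) = φ X - φ Y := by
  rw [sub_eq_add_neg, conn_add φ hφ hX (vf_neg hY), conn_neg φ hφ hY, sub_eq_add_neg]

lemma conn_idem (hφ : IsConnection A φ) {X : Vec A} (hX : IsVectorField A X) :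
    φ (φ X) = φ X := hφ.idem X hX

lemma hpr_eq (W : Vec A) : hpr A φ W = W - φ W := rfl

lemma h_phi (hφ : IsConnection A φ) {X : Vec A} (hX : IsVectorField A X) :
    hpr A φ (φ X) = 0 := by rw [hpr_eq, conn_idem φ hφ hX, sub_self]

lemma h_h (hφ : IsConnection A φ) {X : Vec A} (hX : IsVectorField A X) :
    hpr A φ (hpr A φ X) = hpr A φ X := by
  rw [hpr_eq φ (hpr A φ X), hpr_eq φ X, conn_sub φ hφ hX (hφ.vf X hX),
    conn_idem φ hφ hX, sub_self, sub_zero]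

lemma h_add (hφ : IsConnection A φ) {X Y : Vec A} (hX : IsVectorField A X)
    (hY : IsVectorField A Y) : hpr A φ (X + Y) = hpr A φ X + hpr A φ Y := by
  simp only [hpr_eq, conn_add φ hφ hX hY]; abel

lemma h_neg (hφ : IsConnection A φ) {X : Vec A} (hX : IsVectorField A X) :
    hpr A φ (-X) = -hpr A φ X := by
  simp only [hpr_eq, conn_neg φ hφ hX]; abel

lemma h_sub (hφ : IsConnection A φ) {X Y : Vec A} (hX : IsVectorField A X)
    (hY : IsVectorField A Y) : hpr A φ (X - Y) = hpr A φ X - hpr A φ Y := by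
  simp only [hpr_eq, conn_sub φ hφ hX hY]; abel

lemma lie_applyf (P Q : Vec A) (t : A) : ⁅P, Q⁆ t = P (Q t) - Q (P t) := by
  simp [Ring.lie_def, LinearMap.sub_apply, Module.End.mul_apply]

lemma hpr_applyf (W : Vec A) (t : A) : hpr A φ W t = W t - φ W t := rfl

/-- Decomposition of a bracket into its `φ`/`h` components. -/
lemma bracket_decomp (a b : Vec A) :
    ⁅a, b⁆ = ⁅φ a, φ b⁆ + ⁅φ a, hpr A φ b⁆ - ⁅φ b, hpr A φ a⁆ + ⁅hpr A φ a, hpr A φ b⁆ := by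
  simp only [hpr_eq, Ring.lie_def, mul_sub, sub_mul]
  abel

lemma decomp_right (W b : Vec A) : ⁅W, b⁆ = ⁅W, φ b⁆ + ⁅W, hpr A φ b⁆ := by
  rw [← lie_add]
  congr 1
  rw [hpr_eq]
  abel

end Basic

section Supp
variable {A : Type*} [CommRing A] [Algebra ℝ A]

lemma insS_eq_zero {k : ℕ} {K : VF A} {ω : SF A} {ℓ : List (Vec A)}
    (h : ∀ ℓ', k ≤ ℓ.length → ℓ'.length = ℓ.length - k + 1 → ω ℓ' = 0) :
    insS A k K ω ℓ = 0 := by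
  rw [insS, LinearMap.pi_apply]
  rw [apply_dite (fun g : SF A →ₗ[ℝ] A => g ω)]
  split
  · next hk =>
    rw [LinearMap.smul_apply, LinearMap.coe_sum, Finset.sum_apply]
    rw [Finset.sum_eq_zero, smul_zero]
    intro σ _
    rw [LinearMap.smul_apply, LinearMap.proj_apply,
      h _ hk (by simp), smul_zero]
  · rfl

lemma insVV_eq_zero {k : ℕ} {K : VF A} {T : VF A} {ℓ : List (Vec A)}
    (h : ∀ ℓ', k ≤ ℓ.length → ℓ'.length = ℓ.length - k + 1 → T ℓ' = 0) :
    insVV A k K T ℓ = 0 := by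
  rw [insVV]
  split
  · next hk =>
    rw [Finset.sum_eq_zero, smul_zero]
    intro σ _
    rw [h _ hk (by simp), smul_zero]
  · rfl

lemma extd_eq_zero {ω : SF A} {ℓ : List (Vec A)}
    (h : ∀ ℓ', ℓ'.length + 1 = ℓ.length → ω ℓ' = 0) :
    extd A ω ℓ = 0 := by
  rw [extd, LinearMap.pi_apply, LinearMap.add_apply]
  simp only [LinearMap.coe_sum, Finset.sum_apply, LinearMap.smul_apply,
    LinearMap.comp_apply, LinearMap.proj_apply]
  rw [Finset.sum_eq_zero, Finset.sum_eq_zero, add_zero]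
  · intro i _
    rw [Finset.sum_eq_zero]
    intro j hj
    have hj2 := (Finset.mem_filter.mp hj).2
    have hi := i.isLt
    have hjl := j.isLt
    rw [h _ (by
      simp only [List.length_cons]
      rw [List.length_eraseIdx, List.length_eraseIdx]
      · rw [if_pos hjl, if_pos (by omega)]
        omega), smul_zero]
  · intro i _
    rw [h _ (by rw [List.length_eraseIdx, if_pos i.isLt]; have := i.isLt; omega),
      map_zero, smul_zero]

lemma insS_constF {k : ℕ} (K : VF A) (f : A) : insS A k K (constF A f) = 0 := by
  funext ℓ
  rw [insS_eq_zero]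
  · rfl
  · intro ℓ' _ hl
    match ℓ' with
    | [] => simp at hl
    | x :: t => rfl

lemma theta_constF (k : ℕ) (K : VF A) (f : A) :
    theta A k K (constF A f) = insS A k K (extd A (constF A f)) := by
  rw [theta, LinearMap.sub_apply, LinearMap.comp_apply, LinearMap.smul_apply,
    LinearMap.comp_apply, insS_constF, map_zero, smul_zero, sub_zero]

lemma supp_extd {p : ℕ} {ω : SF A} (hω : ∀ ℓ', ℓ'.length ≠ p → ω ℓ' = 0) :
    ∀ ℓ, ℓ.length ≠ p + 1 → extd A ω ℓ = 0 := by
  intro ℓ hl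
  exact extd_eq_zero (fun ℓ' h => hω ℓ' (by omega))

lemma supp_insS {p k : ℕ} {K : VF A} {ω : SF A} (hω : ∀ ℓ', ℓ'.length ≠ p + 1 → ω ℓ' = 0) :
    ∀ ℓ, ℓ.length ≠ p + k → insS A k K ω ℓ = 0 := by
  intro ℓ hl
  exact insS_eq_zero (fun ℓ' hk h => hω ℓ' (by omega))

lemma curv_supp (φ : Vec A → Vec A) : ∀ ℓ, ℓ.length ≠ 2 → curv A φ ℓ = 0 := by
  intro ℓ h
  match ℓ with
  | [] => rfl
  | [a] => rfl
  | [a, b] => simp at h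
  | a :: b :: c :: t => rfl

lemma cocurv_supp (φ : Vec A → Vec A) : ∀ ℓ, ℓ.length ≠ 2 → cocurv A φ ℓ = 0 := by
  intro ℓ h
  match ℓ with
  | [] => rfl
  | [a] => rfl
  | [a, b] => simp at h
  | a :: b :: c :: t => rfl

end Supp

section Blocks
variable {A : Type*} [CommRing A] [Algebra ℝ A]

/-- The curvature value `R(a,b) = φ ⁅h a, h b⁆`. -/
def Rv (φ : Vec A → Vec A) (a b : Vec A) : Vec A := φ ⁅hpr A φ a, hpr A φ b⁆

/-- The cocurvature value `R̄(a,b) = h ⁅φ a, φ b⁆`. -/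
def Cv (φ : Vec A → Vec A) (a b : Vec A) : Vec A := hpr A φ ⁅φ a, φ b⁆

variable (φ : Vec A → Vec A)

lemma curv_pair (a b : Vec A) : curv A φ [a, b] = Rv φ a b := rfl
lemma cocurv_pair (a b : Vec A) : cocurv A φ [a, b] = Cv φ a b := rfl
lemma oneF_val (a : Vec A) : oneF A φ [a] = φ a := rfl
lemma constF_nil (f : A) : constF A f [] = f := rfl

lemma vf_Rv (hφ : IsConnection A φ) {a b : Vec A} (ha : IsVectorField A a)
    (hb : IsVectorField A b) : IsVectorField A (Rv φ a b) :=
  hφ.vf _ (vf_bracket (vf_hpr φ hφ ha) (vf_hpr φ hφ hb))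

lemma vf_Cv (hφ : IsConnection A φ) {a b : Vec A} (ha : IsVectorField A a)
    (hb : IsVectorField A b) : IsVectorField A (Cv φ a b) :=
  vf_hpr φ hφ (vf_bracket (hφ.vf a ha) (hφ.vf b hb))

lemma idem_Rv (hφ : IsConnection A φ) {a b : Vec A} (ha : IsVectorField A a)
    (hb : IsVectorField A b) : φ (Rv φ a b) = Rv φ a b :=
  conn_idem φ hφ (vf_bracket (vf_hpr φ hφ ha) (vf_hpr φ hφ hb))

lemma Rv_swap (hφ : IsConnection A φ) {a b : Vec A} (ha : IsVectorField A a)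
    (hb : IsVectorField A b) : Rv φ b a = -Rv φ a b := by
  rw [Rv, Rv, show ⁅hpr A φ b, hpr A φ a⁆ = -⁅hpr A φ a, hpr A φ b⁆ from (lie_skew _ _).symm,
    conn_neg φ hφ (vf_bracket (vf_hpr φ hφ ha) (vf_hpr φ hφ hb))]

lemma Cv_swap (hφ : IsConnection A φ) {a b : Vec A} (ha : IsVectorField A a)
    (hb : IsVectorField A b) : Cv φ b a = -Cv φ a b := by
  rw [Cv, Cv, show ⁅φ b, φ a⁆ = -⁅φ a, φ b⁆ from (lie_skew _ _).symm,
    h_neg φ hφ (vf_bracket (hφ.vf a ha) (hφ.vf b hb))]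

lemma Rv_phi_left (hφ : IsConnection A φ) {a : Vec A} (ha : IsVectorField A a) (c : Vec A) :
    Rv φ (φ a) c = 0 := by
  rw [Rv, h_phi φ hφ ha, zero_lie, conn_zero φ hφ]

lemma Rv_phi_right (hφ : IsConnection A φ) {a : Vec A} (ha : IsVectorField A a) (c : Vec A) :
    Rv φ c (φ a) = 0 := by
  rw [Rv, h_phi φ hφ ha, lie_zero, conn_zero φ hφ]

lemma hpr_Cv (hφ : IsConnection A φ) {a b : Vec A} (ha : IsVectorField A a)
    (hb : IsVectorField A b) : hpr A φ (Cv φ a b) = Cv φ a b :=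
  h_h φ hφ (vf_bracket (hφ.vf a ha) (hφ.vf b hb))

lemma half_smul (x : A) : (2 : ℝ)⁻¹ • (x + x) = x := by
  rw [← two_smul ℝ x, smul_smul]
  norm_num

/-- value of `ω₂ = i(R) d f` on a pair of vector fields -/
lemma omega2_val (hφ : IsConnection A φ) (f : A) {U V : Vec A} (hU : IsVectorField A U)
    (hV : IsVectorField A V) :
    insS A 2 (curv A φ) (extd A (constF A f)) [U, V] = Rv φ U V f := by
  rw [insS_two_two, extd_one, extd_one, constF_nil, curv_pair, curv_pair,
    Rv_swap φ hφ hU hV, LinearMap.neg_apply, sub_neg_eq_add, half_smul]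

/-- value of `γ = i(R) ω₁` on a pair of vector fields -/
lemma gamma_val (hφ : IsConnection A φ) (f : A) {U V : Vec A} (hU : IsVectorField A U)
    (hV : IsVectorField A V) :
    insS A 2 (curv A φ) (insS A 1 (oneF A φ) (extd A (constF A f))) [U, V] = Rv φ U V f := by
  rw [insS_two_two, insS_one_one, insS_one_one, oneF_val, oneF_val, extd_one, extd_one,
    constF_nil, curv_pair, curv_pair, idem_Rv φ hφ hU hV, Rv_swap φ hφ hU hV,
    conn_neg φ hφ (vf_Rv φ hφ hU hV), idem_Rv φ hφ hU hV, LinearMap.neg_apply,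
    sub_neg_eq_add, half_smul]

/-- value of `β = i(φ) ω₂` on a pair of vector fields -/
lemma beta_val (hφ : IsConnection A φ) (f : A) {U V : Vec A} (hU : IsVectorField A U)
    (hV : IsVectorField A V) :
    insS A 1 (oneF A φ) (insS A 2 (curv A φ) (extd A (constF A f))) [U, V] = 0 := by
  rw [insS_one_two, oneF_val, oneF_val, omega2_val φ hφ f (hφ.vf U hU) hV,
    omega2_val φ hφ f (hφ.vf V hV) hU, Rv_phi_left φ hφ hU, Rv_phi_left φ hφ hV]
  simp

end Blocks

section BigBlocks
variable {A : Type*} [CommRing A] [Algebra ℝ A] (φ : Vec A → Vec A)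

lemma cocurv_raw (a b : Vec A) : cocurv A φ [a, b] = hpr A φ ⁅φ a, φ b⁆ := rfl

lemma blockA2 (hφ : IsConnection A φ) (f : A) {X Y Z : Vec A} (hX : IsVectorField A X)
    (hY : IsVectorField A Y) (hZ : IsVectorField A Z) :
    extd A (insS A 2 (curv A φ) (insS A 1 (oneF A φ) (extd A (constF A f)))) [X, Y, Z]
      = X (Rv φ Y Z f) - Y (Rv φ X Z f) + Z (Rv φ X Y f)
        - Rv φ ⁅X, Y⁆ Z f + Rv φ ⁅X, Z⁆ Y f - Rv φ ⁅Y, Z⁆ X f := by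
  rw [extd_three, gamma_val φ hφ f hY hZ, gamma_val φ hφ f hX hZ, gamma_val φ hφ f hX hY,
    gamma_val φ hφ f (vf_bracket hX hY) hZ, gamma_val φ hφ f (vf_bracket hX hZ) hY,
    gamma_val φ hφ f (vf_bracket hY hZ) hX]

lemma blockA4 (hφ : IsConnection A φ) (f : A) {X Y Z : Vec A} (hX : IsVectorField A X)
    (hY : IsVectorField A Y) (hZ : IsVectorField A Z) :
    extd A (insS A 1 (oneF A φ) (insS A 2 (curv A φ) (extd A (constF A f)))) [X, Y, Z]
      = 0 := by
  rw [extd_three, beta_val φ hφ f hY hZ, beta_val φ hφ f hX hZ, beta_val φ hφ f hX hY,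
    beta_val φ hφ f (vf_bracket hX hY) hZ, beta_val φ hφ f (vf_bracket hX hZ) hY,
    beta_val φ hφ f (vf_bracket hY hZ) hX]
  simp

lemma blockA1 (hφ : IsConnection A φ) (f : A) {X Y Z : Vec A} (hX : IsVectorField A X)
    (hY : IsVectorField A Y) (hZ : IsVectorField A Z) :
    insS A 2 (curv A φ) (extd A (insS A 1 (oneF A φ) (extd A (constF A f)))) [X, Y, Z]
      = ((Rv φ X Y) ((φ Z) f) - Z (Rv φ X Y f) - (φ ⁅Rv φ X Y, Z⁆) f)
        - ((Rv φ X Z) ((φ Y) f) - Y (Rv φ X Z f) - (φ ⁅Rv φ X Z, Y⁆) f)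
        + ((Rv φ Y Z) ((φ X) f) - X (Rv φ Y Z f) - (φ ⁅Rv φ Y Z, X⁆) f) := by
  have sYX : Rv φ Y X = -Rv φ X Y := Rv_swap φ hφ hX hY
  have sZX : Rv φ Z X = -Rv φ X Z := Rv_swap φ hφ hX hZ
  have sZY : Rv φ Z Y = -Rv φ Y Z := Rv_swap φ hφ hY hZ
  rw [insS_two_three]
  simp only [extd_two, insS_one_one, oneF_val, extd_one, constF_nil, curv_pair]
  simp (config := { maxDischargeDepth := 8 }) only [sYX, sZX, sZY, idem_Rv φ hφ,
    conn_neg φ hφ, neg_lie, map_neg, LinearMap.neg_apply, vf_Rv φ hφ, vf_bracket,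
    vf_hpr φ hφ, vf_neg, hφ.vf, hX, hY, hZ]
  module

lemma blockA3 (hφ : IsConnection A φ) (f : A) {X Y Z : Vec A} (hX : IsVectorField A X)
    (hY : IsVectorField A Y) (hZ : IsVectorField A Z) :
    insS A 1 (oneF A φ) (extd A (insS A 2 (curv A φ) (extd A (constF A f)))) [X, Y, Z]
      = ((φ X) (Rv φ Y Z f) - Rv φ ⁅φ X, Y⁆ Z f + Rv φ ⁅φ X, Z⁆ Y f)
        - ((φ Y) (Rv φ X Z f) - Rv φ ⁅φ Y, X⁆ Z f + Rv φ ⁅φ Y, Z⁆ X f)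
        + ((φ Z) (Rv φ X Y f) - Rv φ ⁅φ Z, X⁆ Y f + Rv φ ⁅φ Z, Y⁆ X f) := by
  have sYX : Rv φ Y X = -Rv φ X Y := Rv_swap φ hφ hX hY
  have sZX : Rv φ Z X = -Rv φ X Z := Rv_swap φ hφ hX hZ
  have sZY : Rv φ Z Y = -Rv φ Y Z := Rv_swap φ hφ hY hZ
  rw [insS_one_three]
  simp only [oneF_val, extd_three]
  simp (config := { maxDischargeDepth := 8 }) only [omega2_val φ hφ f, vf_bracket,
    vf_hpr φ hφ, hφ.vf, hX, hY, hZ]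
  simp (config := { maxDischargeDepth := 8 }) only [Rv_phi_left φ hφ, Rv_phi_right φ hφ,
    sYX, sZX, sZY, LinearMap.zero_apply, LinearMap.neg_apply, map_neg, map_zero,
    vf_bracket, vf_hpr φ hφ, hφ.vf, hX, hY, hZ]
  module

lemma rhs1 (hφ : IsConnection A φ) {X Y Z : Vec A} (hX : IsVectorField A X)
    (hY : IsVectorField A Y) (hZ : IsVectorField A Z) :
    insVV A 2 (curv A φ) (cocurv A φ) [X, Y, Z]
      = hpr A φ ⁅Rv φ X Y, φ Z⁆ - hpr A φ ⁅Rv φ X Z, φ Y⁆ + hpr A φ ⁅Rv φ Y Z, φ X⁆ := by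
  have sYX : Rv φ Y X = -Rv φ X Y := Rv_swap φ hφ hX hY
  have sZX : Rv φ Z X = -Rv φ X Z := Rv_swap φ hφ hX hZ
  have sZY : Rv φ Z Y = -Rv φ Y Z := Rv_swap φ hφ hY hZ
  rw [insVV_two_three]
  simp only [curv_pair, cocurv_raw]
  simp (config := { maxDischargeDepth := 8 }) only [sYX, sZX, sZY, idem_Rv φ hφ,
    conn_neg φ hφ, h_neg φ hφ, neg_lie, vf_Rv φ hφ, vf_bracket, vf_hpr φ hφ, vf_neg,
    hφ.vf, hX, hY, hZ]
  module

lemma rhs2 (hφ : IsConnection A φ) {X Y Z : Vec A} (hX : IsVectorField A X)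
    (hY : IsVectorField A Y) (hZ : IsVectorField A Z) :
    insVV A 2 (cocurv A φ) (curv A φ) [X, Y, Z]
      = φ ⁅hpr A φ ⁅φ X, φ Y⁆, hpr A φ Z⁆ - φ ⁅hpr A φ ⁅φ X, φ Z⁆, hpr A φ Y⁆
        + φ ⁅hpr A φ ⁅φ Y, φ Z⁆, hpr A φ X⁆ := by
  have cYX : ⁅φ Y, φ X⁆ = -⁅φ X, φ Y⁆ := (lie_skew _ _).symm
  have cZX : ⁅φ Z, φ X⁆ = -⁅φ X, φ Z⁆ := (lie_skew _ _).symm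
  have cZY : ⁅φ Z, φ Y⁆ = -⁅φ Y, φ Z⁆ := (lie_skew _ _).symm
  rw [insVV_two_three]
  simp only [curv_pair, cocurv_raw, Rv]
  simp (config := { maxDischargeDepth := 8 }) only [cYX, cZX, cZY, h_neg φ hφ, h_h φ hφ,
    neg_lie, conn_neg φ hφ, vf_bracket, vf_hpr φ hφ, vf_neg, hφ.vf, hX, hY, hZ]
  module

end BigBlocks

section Main
variable {A : Type*} [CommRing A] [Algebra ℝ A]

lemma theta_apply (k : ℕ) (K : VF A) (ω : SF A) (ℓ : List (Vec A)) :
    theta A k K ω ℓ = insS A k K (extd A ω) ℓ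
      - ((-1 : ℝ)) ^ (k + 1) • extd A (insS A k K ω) ℓ := by
  simp only [theta, LinearMap.sub_apply, LinearMap.comp_apply, LinearMap.smul_apply,
    Pi.sub_apply, Pi.smul_apply]

theorem main_bianchi (φ : Vec A → Vec A) (hφ : IsConnection A φ) :
    VEq A (fnb A 2 1 (curv A φ) (oneF A φ))
      (insVV A 2 (curv A φ) (cocurv A φ) + insVV A 2 (cocurv A φ) (curv A φ)) := by
  intro ℓ hℓ
  by_cases h3 : ℓ.length = 3
  case neg =>
    have hR : (insVV A 2 (curv A φ) (cocurv A φ) + insVV A 2 (cocurv A φ) (curv A φ)) ℓ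
        = 0 := by
      rw [Pi.add_apply, insVV_eq_zero (fun ℓ' hk hl => curv_supp φ ℓ' (by omega)),
        insVV_eq_zero (fun ℓ' hk hl => cocurv_supp φ ℓ' (by omega)), add_zero]
    rw [hR]
    apply LinearMap.ext; intro f
    simp only [fnb, LinearMap.comp_apply, LinearMap.sub_apply, LinearMap.smul_apply,
      LinearMap.proj_apply, Pi.sub_apply, Pi.smul_apply, LinearMap.zero_apply]
    rw [theta_constF, theta_constF]
    have s0 : ∀ ℓ' : List (Vec A), ℓ'.length ≠ 0 → constF A f ℓ' = 0 := by
      intro ℓ' h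
      match ℓ' with
      | [] => exact absurd rfl h
      | x :: t => rfl
    have s1 := supp_extd (p := 0) s0
    have sω₁ : ∀ ℓ', ℓ'.length ≠ 1 →
        insS A 1 (oneF A φ) (extd A (constF A f)) ℓ' = 0 :=
      supp_insS (p := 0) (k := 1) s1
    have sω₂ : ∀ ℓ', ℓ'.length ≠ 2 →
        insS A 2 (curv A φ) (extd A (constF A f)) ℓ' = 0 :=
      supp_insS (p := 0) (k := 2) s1
    rw [theta_apply, theta_apply,
      supp_insS (p := 1) (k := 2) (supp_extd (p := 1) sω₁) ℓ (by omega),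
      supp_extd (p := 2) (supp_insS (p := 0) (k := 2) sω₁) ℓ (by omega),
      supp_insS (p := 2) (k := 1) (supp_extd (p := 2) sω₂) ℓ (by omega),
      supp_extd (p := 2) (supp_insS (p := 1) (k := 1) sω₂) ℓ (by omega)]
    simp
  case pos =>
    obtain ⟨X, Y, Z, rfl⟩ : ∃ X Y Z, ℓ = [X, Y, Z] := by
      rcases ℓ with _ | ⟨X, ℓ⟩
      · simp at h3
      rcases ℓ with _ | ⟨Y, ℓ⟩
      · simp at h3
      rcases ℓ with _ | ⟨Z, ℓ⟩
      · simp at h3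
      rcases ℓ with _ | ⟨W, ℓ⟩
      · exact ⟨X, Y, Z, rfl⟩
      · simp at h3
    have hX : IsVectorField A X := hℓ X (by simp)
    have hY : IsVectorField A Y := hℓ Y (by simp)
    have hZ : IsVectorField A Z := hℓ Z (by simp)
    apply LinearMap.ext; intro f
    rw [Pi.add_apply, rhs1 φ hφ hX hY hZ, rhs2 φ hφ hX hY hZ]
    simp only [fnb, LinearMap.comp_apply, LinearMap.sub_apply, LinearMap.smul_apply,
      LinearMap.proj_apply, Pi.sub_apply, Pi.smul_apply]
    rw [theta_constF, theta_constF, theta_apply, theta_apply,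
      show ((-1 : ℝ)) ^ (2 * 1) = 1 by norm_num, one_smul,
      show ((-1 : ℝ)) ^ (2 + 1) = -1 by norm_num, neg_smul, one_smul, one_smul,
      sub_neg_eq_add,
      blockA1 φ hφ f hX hY hZ, blockA2 φ hφ f hX hY hZ, blockA3 φ hφ f hX hY hZ,
      blockA4 φ hφ f hX hY hZ, sub_zero]
    -- core algebraic identity
    have cYX : ⁅φ Y, φ X⁆ = -⁅φ X, φ Y⁆ := (lie_skew _ _).symm
    have cZX : ⁅φ Z, φ X⁆ = -⁅φ X, φ Z⁆ := (lie_skew _ _).symm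
    have cZY : ⁅φ Z, φ Y⁆ = -⁅φ Y, φ Z⁆ := (lie_skew _ _).symm
    have jac : ⁅(⁅hpr A φ X, hpr A φ Y⁆ : Vec A), hpr A φ Z⁆
        = ⁅(⁅hpr A φ X, hpr A φ Z⁆ : Vec A), hpr A φ Y⁆
          - ⁅(⁅hpr A φ Y, hpr A φ Z⁆ : Vec A), hpr A φ X⁆ := by
      simp only [Ring.lie_def, mul_sub, sub_mul, mul_assoc]
      abel
    simp only [LinearMap.add_apply, LinearMap.sub_apply]
    simp only [hpr_applyf φ]
    simp only [lie_applyf]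
    rw [decomp_right φ (Rv φ X Y) Z, decomp_right φ (Rv φ X Z) Y,
      decomp_right φ (Rv φ Y Z) X]
    simp only [Rv]
    rw [bracket_decomp φ X Y, bracket_decomp φ X Z, bracket_decomp φ Y Z]
    rw [decomp_right φ (φ X) Y, decomp_right φ (φ X) Z, decomp_right φ (φ Y) X,
      decomp_right φ (φ Y) Z, decomp_right φ (φ Z) X, decomp_right φ (φ Z) Y]
    simp (config := { maxDischargeDepth := 8 }) only [cYX, cZX, cZY, h_add φ hφ,
      h_sub φ hφ, h_neg φ hφ, add_lie, sub_lie, neg_lie, conn_add φ hφ, conn_sub φ hφ,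
      conn_neg φ hφ, LinearMap.add_apply, LinearMap.sub_apply, LinearMap.neg_apply,
      map_add, map_sub, map_neg, vf_bracket, vf_hpr φ hφ, vf_add, vf_sub, vf_neg,
      hφ.vf, hX, hY, hZ]
    rw [hpr_eq φ ⁅hpr A φ X, hpr A φ Y⁆, hpr_eq φ ⁅hpr A φ X, hpr A φ Z⁆,
      hpr_eq φ ⁅hpr A φ Y, hpr A φ Z⁆]
    simp (config := { maxDischargeDepth := 8 }) only [sub_lie, conn_sub φ hφ,
      LinearMap.sub_apply, vf_bracket, vf_hpr φ hφ, hφ.vf, hX, hY, hZ]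
    rw [jac]
    simp (config := { maxDischargeDepth := 8 }) only [sub_lie, conn_sub φ hφ,
      LinearMap.sub_apply, vf_bracket, vf_hpr φ hφ, hφ.vf, hX, hY, hZ]
    module

end Main

/-- **Bianchi identity, second part** (Lemma 1.4).  For any connection `φ` with
curvature `R` and cocurvature `R̄`, `[R, φ] = i(R)R̄ + i(R̄)R`, where `[·,·]` is the
Frölicher–Nijenhuis bracket and `i` is the insertion operator. -/
theorem bianchi_identity_second_part
    {EM : Type*} [NormedAddCommGroup EM] [NormedSpace ℝ EM]
    {HM : Type*} [TopologicalSpace HM] {IM : ModelWithCorners ℝ EM HM}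
    {M : Type*} [TopologicalSpace M] [ChartedSpace HM M] [IsManifold IM (⊤ : ℕ∞) M]
    (φ : Vec (SmoothFns IM M) → Vec (SmoothFns IM M))
    (hφ : IsConnection (SmoothFns IM M) φ) :
    VEq (SmoothFns IM M)
      (fnb (SmoothFns IM M) 2 1 (curv (SmoothFns IM M) φ) (oneF (SmoothFns IM M) φ))
      (insVV (SmoothFns IM M) 2 (curv (SmoothFns IM M) φ) (cocurv (SmoothFns IM M) φ) + insVV (SmoothFns IM M) 2 (cocurv (SmoothFns IM M) φ) (curv (SmoothFns IM M) φ)) := by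
  exact main_bianchi φ hφ
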